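/- Let q be a prime power and L ⊆ {1,…,q−1} with |L| = s. If F ⊆ 2^[n] is a family such that for all distinct A, B ∈ F, |A \ B| is congruent modulo q to some element of L, then |F| ≤ Σ_{i=0}^{2^{s−1}} C(n, i). -/

import Mathlib

namespace Stmt14

/-- Weight function for the separating polynomial, defined by downward recursion on `v`. -/
def mu (k : ℕ) (e : ℕ → ℕ) (L : Finset ℕ) (v : ℕ) : ℕ :=
  if h : v < k then
    (1 + ∑ ℓ ∈ (L.filter (fun ℓ => v < e ℓ ∧ e ℓ < k)).attach,
        mu k e L (e ℓ.1) * (e ℓ.1 - v) + (k - v - 1)) / (k - v)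
  else 1
termination_by k - v
decreasing_by
  · have := ℓ.2
    simp only [Finset.mem_filter] at this
    omega

lemma mu_eq (k : ℕ) (e : ℕ → ℕ) (L : Finset ℕ) (v : ℕ) (h : v < k) :
    mu k e L v =
      (1 + ∑ ℓ ∈ L.filter (fun ℓ => v < e ℓ ∧ e ℓ < k),
        mu k e L (e ℓ) * (e ℓ - v) + (k - v - 1)) / (k - v) := by
  rw [mu, dif_pos h]
  rw [Finset.sum_attach (L.filter (fun ℓ => v < e ℓ ∧ e ℓ < k))
    (fun ℓ => mu k e L (e ℓ) * (e ℓ - v))]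

lemma mu_spec (k : ℕ) (e : ℕ → ℕ) (L : Finset ℕ) (v : ℕ) (h : v < k) :
    1 + ∑ ℓ ∈ L.filter (fun ℓ => v < e ℓ ∧ e ℓ < k),
        mu k e L (e ℓ) * (e ℓ - v) ≤ mu k e L v * (k - v) := by
  rw [mu_eq k e L v h]
  generalize (1 + ∑ ℓ ∈ L.filter (fun ℓ => v < e ℓ ∧ e ℓ < k),
        mu k e L (e ℓ) * (e ℓ - v)) = a
  generalize hb : k - v = b
  have hb0 : 0 < b := by omega
  have h1 := Nat.div_add_mod (a + (b - 1)) b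
  have h2 := Nat.mod_lt (a + (b - 1)) hb0
  have h3 : (a + (b - 1)) / b * b = b * ((a + (b - 1)) / b) := Nat.mul_comm _ _
  omega

lemma mu_pos (k : ℕ) (e : ℕ → ℕ) (L : Finset ℕ) (v : ℕ) (h : v < k) :
    1 ≤ mu k e L v := by
  have hs := mu_spec k e L v h
  by_contra hc
  have h0 : mu k e L v = 0 := by omega
  rw [h0, Nat.zero_mul] at hs
  omega

lemma mu_eq_one (k : ℕ) (e : ℕ → ℕ) (L : Finset ℕ) (v : ℕ) (h : v < k)
    (hemp : L.filter (fun ℓ => v < e ℓ ∧ e ℓ < k) = ∅) :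
    mu k e L v = 1 := by
  rw [mu_eq k e L v h, hemp]
  simp only [Finset.sum_empty, add_zero]
  have : 1 + 0 + (k - v - 1) = k - v := by omega
  rw [this, Nat.div_self (by omega)]

lemma mu_le (k : ℕ) (e : ℕ → ℕ) (L : Finset ℕ) (v : ℕ) (h : v < k)
    (hne : (L.filter (fun ℓ => v < e ℓ ∧ e ℓ < k)).Nonempty) :
    mu k e L v ≤ ∑ ℓ ∈ L.filter (fun ℓ => v < e ℓ ∧ e ℓ < k), mu k e L (e ℓ) := by
  have hS1 : 1 ≤ ∑ ℓ ∈ L.filter (fun ℓ => v < e ℓ ∧ e ℓ < k), mu k e L (e ℓ) := by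
    obtain ⟨ℓ0, hℓ0⟩ := hne
    have h1 : 1 ≤ mu k e L (e ℓ0) := by
      apply mu_pos
      have := hℓ0; rw [Finset.mem_filter] at this; exact this.2.2
    exact le_trans h1 (Finset.single_le_sum (f := fun ℓ => mu k e L (e ℓ))
      (fun i _ => Nat.zero_le _) hℓ0)
  rw [mu_eq k e L v h]
  generalize hS : (∑ ℓ ∈ L.filter (fun ℓ => v < e ℓ ∧ e ℓ < k), mu k e L (e ℓ)) = S at *
  have hsum : ∑ ℓ ∈ L.filter (fun ℓ => v < e ℓ ∧ e ℓ < k), mu k e L (e ℓ) * (e ℓ - v)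
      ≤ S * (k - v - 1) := by
    rw [← hS, Finset.sum_mul]
    apply Finset.sum_le_sum
    intro ℓ hℓ
    rw [Finset.mem_filter] at hℓ
    exact Nat.mul_le_mul_left _ (by omega)
  generalize hN : (∑ ℓ ∈ L.filter (fun ℓ => v < e ℓ ∧ e ℓ < k),
      mu k e L (e ℓ) * (e ℓ - v)) = N at *
  have key : 1 + N + (k - v - 1) < (S + 1) * (k - v) := by
    have e1 : (S + 1) * (k - v) = S * (k - v) + (k - v) := by ring
    have e2 : S * (k - v) = S * (k - v - 1) + S := by
      have hb : k - v - 1 + 1 = k - v := by omega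
      calc S * (k - v) = S * ((k - v - 1) + 1) := by rw [hb]
        _ = S * (k - v - 1) + S := by ring
    omega
  have := (Nat.div_lt_iff_lt_mul (show 0 < k - v by omega)).2 key
  omega


lemma filt_eq (k : ℕ) (e : ℕ → ℕ) (L : Finset ℕ) (v : ℕ) (he : ∀ ℓ ∈ L, e ℓ < k) :
    L.filter (fun ℓ => v < e ℓ ∧ e ℓ < k) = L.filter (fun ℓ => v + 1 ≤ e ℓ) := by
  apply Finset.filter_congr
  intro ℓ hℓ
  have := he ℓ hℓ
  constructor
  · rintro ⟨h1, _⟩; omega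
  · intro h1; exact ⟨by omega, this⟩

lemma sum_mu_aux (k : ℕ) (e : ℕ → ℕ) (L : Finset ℕ) (he : ∀ ℓ ∈ L, e ℓ < k) :
    ∀ t v, k ≤ v + t →
      ((L.filter (fun ℓ => v ≤ e ℓ)).Nonempty →
        ∑ ℓ ∈ L.filter (fun ℓ => v ≤ e ℓ), mu k e L (e ℓ)
          ≤ 2 ^ ((L.filter (fun ℓ => v ≤ e ℓ)).card - 1)) := by
  intro t
  induction t with
  | zero =>
    intro v hv hne
    obtain ⟨ℓ, hℓ⟩ := hne
    rw [Finset.mem_filter] at hℓ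
    have := he ℓ hℓ.1
    omega
  | succ t ih =>
    intro v hv hne
    by_cases hvk : k ≤ v
    · obtain ⟨ℓ, hℓ⟩ := hne
      rw [Finset.mem_filter] at hℓ
      have := he ℓ hℓ.1
      omega
    push_neg at hvk
    -- split the filter
    have eq1 : (L.filter (fun ℓ => v ≤ e ℓ)).filter (fun ℓ => v + 1 ≤ e ℓ)
        = L.filter (fun ℓ => v + 1 ≤ e ℓ) := by
      rw [Finset.filter_filter]
      apply Finset.filter_congr
      intro ℓ _; constructor
      · rintro ⟨_, h2⟩; exact h2
      · intro h1; exact ⟨by omega, h1⟩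
    have eq2 : (L.filter (fun ℓ => v ≤ e ℓ)).filter (fun ℓ => ¬ (v + 1 ≤ e ℓ))
        = L.filter (fun ℓ => e ℓ = v) := by
      rw [Finset.filter_filter]
      apply Finset.filter_congr
      intro ℓ _; constructor
      · rintro ⟨h1, h2⟩; omega
      · intro h1; omega
    have hsum := Finset.sum_filter_add_sum_filter_not (L.filter (fun ℓ => v ≤ e ℓ))
        (fun ℓ => v + 1 ≤ e ℓ) (fun ℓ => mu k e L (e ℓ))
    rw [eq1, eq2] at hsum
    have hcard := Finset.card_filter_add_card_filter_not
        (s := L.filter (fun ℓ => v ≤ e ℓ)) (fun ℓ => v + 1 ≤ e ℓ)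
    rw [eq1, eq2] at hcard
    have hEsum : ∑ ℓ ∈ L.filter (fun ℓ => e ℓ = v), mu k e L (e ℓ)
        = (L.filter (fun ℓ => e ℓ = v)).card * mu k e L v := by
      calc ∑ ℓ ∈ L.filter (fun ℓ => e ℓ = v), mu k e L (e ℓ)
          = ∑ _ℓ ∈ L.filter (fun ℓ => e ℓ = v), mu k e L v :=
            Finset.sum_congr rfl (fun ℓ hℓ => by rw [(Finset.mem_filter.1 hℓ).2])
        _ = _ := by rw [Finset.sum_const, smul_eq_mul]
    by_cases hB1 : (L.filter (fun ℓ => v + 1 ≤ e ℓ)).Nonempty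
    · have hS := ih (v + 1) (by omega) hB1
      have hc1pos : 1 ≤ (L.filter (fun ℓ => v + 1 ≤ e ℓ)).card := Finset.card_pos.2 hB1
      have hSpos : 1 ≤ ∑ ℓ ∈ L.filter (fun ℓ => v + 1 ≤ e ℓ), mu k e L (e ℓ) := by
        obtain ⟨ℓ0, hℓ0⟩ := hB1
        have h1 : 1 ≤ mu k e L (e ℓ0) := by
          apply mu_pos
          rw [Finset.mem_filter] at hℓ0
          exact he ℓ0 hℓ0.1
        exact le_trans h1 (Finset.single_le_sum (f := fun ℓ => mu k e L (e ℓ))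
          (fun i _ => Nat.zero_le _) hℓ0)
      have hmuv : mu k e L v ≤ ∑ ℓ ∈ L.filter (fun ℓ => v + 1 ≤ e ℓ), mu k e L (e ℓ) := by
        have h1 := mu_le k e L v hvk (by rw [filt_eq k e L v he]; exact hB1)
        rw [filt_eq k e L v he] at h1
        exact h1
      generalize hc1 : (L.filter (fun ℓ => v + 1 ≤ e ℓ)).card = c1 at hS hcard hc1pos
      generalize hnE : (L.filter (fun ℓ => e ℓ = v)).card = nE at hcard hEsum
      generalize hSS : (∑ ℓ ∈ L.filter (fun ℓ => v + 1 ≤ e ℓ), mu k e L (e ℓ)) = S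
        at hS hSpos hmuv hsum
      have h2 : ∑ ℓ ∈ L.filter (fun ℓ => v ≤ e ℓ), mu k e L (e ℓ)
          ≤ (nE + 1) * S := by
        have : nE * mu k e L v ≤ nE * S := Nat.mul_le_mul_left _ hmuv
        calc ∑ ℓ ∈ L.filter (fun ℓ => v ≤ e ℓ), mu k e L (e ℓ)
            = S + nE * mu k e L v := by omega
          _ ≤ S + nE * S := by omega
          _ = (nE + 1) * S := by ring
      have h3 : (nE + 1) * S ≤ 2 ^ nE * 2 ^ (c1 - 1) :=
        Nat.mul_le_mul (Nat.lt_two_pow_self (n := nE)) hS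
      have h4 : 2 ^ nE * 2 ^ (c1 - 1) = 2 ^ ((c1 + nE) - 1) := by
        rw [← pow_add]
        congr 1
        omega
      have h5 : (L.filter (fun ℓ => v ≤ e ℓ)).card = c1 + nE := by omega
      rw [h5]
      omega
    · rw [Finset.not_nonempty_iff_eq_empty] at hB1
      have hmu1 : mu k e L v = 1 := by
        apply mu_eq_one k e L v hvk
        rw [filt_eq k e L v he, hB1]
      have hc10 : (L.filter (fun ℓ => v + 1 ≤ e ℓ)).card = 0 := by rw [hB1]; simp
      have hS0 : ∑ ℓ ∈ L.filter (fun ℓ => v + 1 ≤ e ℓ), mu k e L (e ℓ) = 0 := by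
        rw [hB1]; simp
      have hnE1 : 1 ≤ (L.filter (fun ℓ => e ℓ = v)).card := by
        have := Finset.card_pos.2 hne
        omega
      have hEq : ∑ ℓ ∈ L.filter (fun ℓ => v ≤ e ℓ), mu k e L (e ℓ)
          = (L.filter (fun ℓ => e ℓ = v)).card := by
        rw [hmu1] at hEsum
        omega
      rw [hEq]
      have h5 : (L.filter (fun ℓ => e ℓ = v)).card - 1
          < 2 ^ ((L.filter (fun ℓ => e ℓ = v)).card - 1) := Nat.lt_two_pow_self
      have h6 : (L.filter (fun ℓ => v ≤ e ℓ)).card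
          = (L.filter (fun ℓ => e ℓ = v)).card := by omega
      rw [h6]
      omega

lemma sum_mu_le (k : ℕ) (e : ℕ → ℕ) (L : Finset ℕ) (he : ∀ ℓ ∈ L, e ℓ < k) (s : ℕ)
    (hLs : L.card = s) :
    ∑ ℓ ∈ L, mu k e L (e ℓ) ≤ 2 ^ (s - 1) := by
  rcases L.eq_empty_or_nonempty with h | h
  · subst h; simp
  · have h0 : L.filter (fun ℓ => 0 ≤ e ℓ) = L :=
      Finset.filter_true_of_mem (fun ℓ _ => Nat.zero_le _)
    have := sum_mu_aux k e L he k 0 (by omega) (by rw [h0]; exact h)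
    rw [h0, hLs] at this
    exact this


section Keys
variable (p k : ℕ) (L : Finset ℕ)

/-- the exponent inequality -/
lemma exponent_ineq (e : ℕ → ℕ) (he : ∀ ℓ ∈ L, e ℓ < k) (ℓ₀ : ℕ) (hℓ₀ : ℓ₀ ∈ L) :
    (∑ ℓ ∈ L, mu k e L (e ℓ) * e ℓ) + 1
      ≤ k * mu k e L (e ℓ₀) + ∑ ℓ ∈ L.erase ℓ₀, mu k e L (e ℓ) * min (e ℓ₀) (e ℓ) := by
  have he₀ : e ℓ₀ < k := he ℓ₀ hℓ₀
  have hspec := mu_spec k e L (e ℓ₀) he₀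
  -- rewrite the filtered sum as a sum over L.erase ℓ₀
  have hfilter : ∑ ℓ ∈ L.filter (fun ℓ => e ℓ₀ < e ℓ ∧ e ℓ < k), mu k e L (e ℓ) * (e ℓ - e ℓ₀)
      = ∑ ℓ ∈ L, mu k e L (e ℓ) * (e ℓ - e ℓ₀) := by
    apply Finset.sum_subset (Finset.filter_subset _ _)
    intro ℓ hℓ hnot
    rw [Finset.mem_filter] at hnot
    have h1 : e ℓ ≤ e ℓ₀ := by
      have := he ℓ hℓ
      by_contra hcon
      exact hnot ⟨hℓ, by omega, this⟩
    have : e ℓ - e ℓ₀ = 0 := by omega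
    rw [this, Nat.mul_zero]
  have hsplit1 : mu k e L (e ℓ₀) * (e ℓ₀ - e ℓ₀) + ∑ ℓ ∈ L.erase ℓ₀, mu k e L (e ℓ) * (e ℓ - e ℓ₀)
      = ∑ ℓ ∈ L, mu k e L (e ℓ) * (e ℓ - e ℓ₀) := Finset.add_sum_erase L (fun ℓ => mu k e L (e ℓ) * (e ℓ - e ℓ₀)) hℓ₀
  have hsplit2 : mu k e L (e ℓ₀) * e ℓ₀ + ∑ ℓ ∈ L.erase ℓ₀, mu k e L (e ℓ) * e ℓ
      = ∑ ℓ ∈ L, mu k e L (e ℓ) * e ℓ := Finset.add_sum_erase L (fun ℓ => mu k e L (e ℓ) * e ℓ) hℓ₀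
  have hpt : ∑ ℓ ∈ L.erase ℓ₀, mu k e L (e ℓ) * (e ℓ - e ℓ₀) + ∑ ℓ ∈ L.erase ℓ₀, mu k e L (e ℓ) * min (e ℓ₀) (e ℓ)
      = ∑ ℓ ∈ L.erase ℓ₀, mu k e L (e ℓ) * e ℓ := by
    rw [← Finset.sum_add_distrib]
    apply Finset.sum_congr rfl
    intro ℓ _
    rw [← Nat.mul_add]
    congr 1
    omega
  have hk : k * mu k e L (e ℓ₀) = mu k e L (e ℓ₀) * (k - e ℓ₀) + mu k e L (e ℓ₀) * e ℓ₀ := by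
    rw [← Nat.mul_add]
    rw [Nat.sub_add_cancel (le_of_lt he₀)]
    exact Nat.mul_comm _ _
  rw [hfilter] at hspec
  omega

lemma key2 (_hp : p.Prime) (e : ℕ → ℕ) (heq : ∀ ℓ, e ℓ = ℓ.factorization p)
    (he : ∀ ℓ ∈ L, e ℓ < k)
    (x ℓ₀ : ℕ) (hℓ₀ : ℓ₀ ∈ L) (hmod : x ≡ ℓ₀ [MOD p ^ k]) :
    (p : ℤ) ^ ((∑ ℓ ∈ L, mu k e L (e ℓ) * e ℓ) + 1)
      ∣ ∏ ℓ ∈ L, ((x : ℤ) - (ℓ : ℤ)) ^ (mu k e L (e ℓ)) := by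
  have hq : (p : ℤ) ^ k ∣ (x : ℤ) - (ℓ₀ : ℤ) := by
    have := (hmod.symm).dvd
    push_cast at this ⊢
    exact_mod_cast this
  have hdvd0 : ((p : ℤ) ^ k) ^ (mu k e L (e ℓ₀)) ∣ ((x : ℤ) - (ℓ₀ : ℤ)) ^ (mu k e L (e ℓ₀)) :=
    pow_dvd_pow_of_dvd hq _
  have hfac : ∀ ℓ ∈ L.erase ℓ₀, (p : ℤ) ^ (min (e ℓ₀) (e ℓ)) ∣ (x : ℤ) - (ℓ : ℤ) := by
    intro ℓ hℓ
    have hmem : ℓ ∈ L := Finset.mem_of_mem_erase hℓ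
    have h1 : (p : ℤ) ^ (min (e ℓ₀) (e ℓ)) ∣ (ℓ : ℤ) := by
      have : (p : ℕ) ^ (e ℓ) ∣ ℓ := by rw [heq ℓ]; exact Nat.ordProj_dvd ℓ p
      have h2 : (p : ℕ) ^ (min (e ℓ₀) (e ℓ)) ∣ ℓ :=
        dvd_trans (pow_dvd_pow p (Nat.min_le_right _ _)) this
      exact_mod_cast Int.natCast_dvd_natCast.2 h2
    have h2 : (p : ℤ) ^ (min (e ℓ₀) (e ℓ)) ∣ (ℓ₀ : ℤ) := by
      have : (p : ℕ) ^ (e ℓ₀) ∣ ℓ₀ := by rw [heq ℓ₀]; exact Nat.ordProj_dvd ℓ₀ p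
      have h3 : (p : ℕ) ^ (min (e ℓ₀) (e ℓ)) ∣ ℓ₀ :=
        dvd_trans (pow_dvd_pow p (Nat.min_le_left _ _)) this
      exact_mod_cast Int.natCast_dvd_natCast.2 h3
    have h3 : (p : ℤ) ^ (min (e ℓ₀) (e ℓ)) ∣ (x : ℤ) - (ℓ₀ : ℤ) := by
      refine dvd_trans (pow_dvd_pow _ ?_) hq
      have := he ℓ₀ hℓ₀
      omega
    have h4 : (p : ℤ) ^ (min (e ℓ₀) (e ℓ)) ∣ (x : ℤ) := by
      have := dvd_add h3 h2
      rwa [sub_add_cancel] at this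
    exact dvd_sub h4 h1
  have hprod : ∏ ℓ ∈ L.erase ℓ₀, ((p : ℤ) ^ (min (e ℓ₀) (e ℓ))) ^ (mu k e L (e ℓ))
      ∣ ∏ ℓ ∈ L.erase ℓ₀, ((x : ℤ) - (ℓ : ℤ)) ^ (mu k e L (e ℓ)) := by
    apply Finset.prod_dvd_prod_of_dvd
    intro ℓ hℓ
    exact pow_dvd_pow_of_dvd (hfac ℓ hℓ) _
  have hprodpow : ∏ ℓ ∈ L.erase ℓ₀, ((p : ℤ) ^ (min (e ℓ₀) (e ℓ))) ^ (mu k e L (e ℓ))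
      = (p : ℤ) ^ (∑ ℓ ∈ L.erase ℓ₀, min (e ℓ₀) (e ℓ) * mu k e L (e ℓ)) := by
    rw [← Finset.prod_pow_eq_pow_sum]
    apply Finset.prod_congr rfl
    intro ℓ _
    rw [← pow_mul]
  have hcombine : (p : ℤ) ^ (k * mu k e L (e ℓ₀) + ∑ ℓ ∈ L.erase ℓ₀, min (e ℓ₀) (e ℓ) * mu k e L (e ℓ))
      ∣ ∏ ℓ ∈ L, ((x : ℤ) - (ℓ : ℤ)) ^ (mu k e L (e ℓ)) := by
    rw [← Finset.mul_prod_erase L _ hℓ₀, pow_add, pow_mul]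
    exact mul_dvd_mul hdvd0 (hprodpow ▸ hprod)
  refine dvd_trans (pow_dvd_pow _ ?_) hcombine
  have := exponent_ineq k L e he ℓ₀ hℓ₀
  have hcomm : ∑ ℓ ∈ L.erase ℓ₀, min (e ℓ₀) (e ℓ) * mu k e L (e ℓ)
      = ∑ ℓ ∈ L.erase ℓ₀, mu k e L (e ℓ) * min (e ℓ₀) (e ℓ) := by
    apply Finset.sum_congr rfl
    intro ℓ _
    exact Nat.mul_comm _ _
  omega

lemma key1 (hp : p.Prime) (e : ℕ → ℕ) (heq : ∀ ℓ, e ℓ = ℓ.factorization p)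
    (hL1 : ∀ ℓ ∈ L, 1 ≤ ℓ) :
    ¬ ((p : ℤ) ^ ((∑ ℓ ∈ L, mu k e L (e ℓ) * e ℓ) + 1)
      ∣ ∏ ℓ ∈ L, ((0 : ℤ) - (ℓ : ℤ)) ^ (mu k e L (e ℓ))) := by
  intro hdvd
  have hprodeq : ∏ ℓ ∈ L, ((0 : ℤ) - (ℓ : ℤ)) ^ (mu k e L (e ℓ))
      = (∏ ℓ ∈ L, (-1 : ℤ) ^ (mu k e L (e ℓ))) * ((∏ ℓ ∈ L, ℓ ^ (mu k e L (e ℓ)) : ℕ) : ℤ) := by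
    push_cast
    rw [← Finset.prod_mul_distrib]
    apply Finset.prod_congr rfl
    intro ℓ _
    rw [← mul_pow]
    congr 1
    ring
  rw [hprodeq] at hdvd
  rw [Finset.prod_pow_eq_pow_sum] at hdvd
  have hunit : IsUnit ((-1 : ℤ) ^ (∑ ℓ ∈ L, mu k e L (e ℓ))) := (IsUnit.neg isUnit_one).pow _
  have hdvd2 : (p : ℤ) ^ ((∑ ℓ ∈ L, mu k e L (e ℓ) * e ℓ) + 1) ∣ ((∏ ℓ ∈ L, ℓ ^ (mu k e L (e ℓ)) : ℕ) : ℤ) :=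
    hunit.dvd_mul_left.1 hdvd
  have hdvd3 : (p : ℕ) ^ ((∑ ℓ ∈ L, mu k e L (e ℓ) * e ℓ) + 1) ∣ ∏ ℓ ∈ L, ℓ ^ (mu k e L (e ℓ)) := by
    exact_mod_cast hdvd2
  have hN0 : (∏ ℓ ∈ L, ℓ ^ (mu k e L (e ℓ))) ≠ 0 := by
    apply Finset.prod_ne_zero_iff.2
    intro ℓ hℓ
    have := hL1 ℓ hℓ
    positivity
  have hfact : (∏ ℓ ∈ L, ℓ ^ (mu k e L (e ℓ))).factorization p = ∑ ℓ ∈ L, mu k e L (e ℓ) * e ℓ := by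
    rw [Nat.factorization_prod (fun ℓ hℓ => by
      have := hL1 ℓ hℓ
      positivity)]
    rw [Finset.sum_apply']
    apply Finset.sum_congr rfl
    intro ℓ _
    rw [Nat.factorization_pow, Finsupp.smul_apply, smul_eq_mul, heq ℓ]
  have := (Nat.Prime.pow_dvd_iff_le_factorization hp hN0).1 hdvd3
  rw [hfact] at this
  omega
end Keys


/-- "monomial" functions -/
def MS (S : Finset (Fin n)) : Finset (Fin n) → ℚ := fun B => if S ∩ B = ∅ then 1 else 0

lemma choose_eq_sum (A : Finset (Fin n)) (j : ℕ) :
    (fun B => (((A \ B).card.choose j : ℕ) : ℚ)) = ∑ S ∈ A.powersetCard j, MS S := by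
  funext B
  rw [Finset.sum_apply]
  unfold MS
  rw [Finset.sum_boole]
  congr 1
  rw [← Finset.card_powersetCard j (A \ B)]
  congr 1
  ext S
  simp only [Finset.mem_filter, Finset.mem_powersetCard, Finset.subset_sdiff,
    ← Finset.disjoint_iff_inter_eq_empty]
  tauto

def mulCard (A : Finset (Fin n)) : (Finset (Fin n) → ℚ) →ₗ[ℚ] (Finset (Fin n) → ℚ) where
  toFun g := fun B => ((A \ B).card : ℚ) * g B
  map_add' g h := by funext B; simp [mul_add]
  map_smul' c g := by funext B; simp only [Pi.smul_apply, smul_eq_mul, RingHom.id_apply]; ring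

lemma cast_choose_id (t j : ℕ) :
    (t : ℚ) * (t.choose j : ℚ)
      = ((j:ℚ)+1) * (t.choose (j+1) : ℚ) + (j:ℚ) * (t.choose j : ℚ) := by
  rcases le_or_gt j t with h | h
  · have h1 := Nat.choose_succ_right_eq t j
    have h1q : (t.choose (j+1) : ℚ) * ((j:ℚ)+1) = (t.choose j : ℚ) * ((t:ℚ) - j) := by
      have h2 := congrArg (fun x : ℕ => (x : ℚ)) h1
      push_cast [Nat.cast_sub h] at h2
      convert h2 using 1
    linear_combination -h1q
  · rw [Nat.choose_eq_zero_of_lt h, Nat.choose_eq_zero_of_lt (lt_trans h (Nat.lt_succ_self j))]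
    simp

lemma pow_mem_span (A : Finset (Fin n)) (i : ℕ) :
    (fun B => ((A \ B).card : ℚ) ^ i) ∈
      Submodule.span ℚ ((fun j => (fun B : Finset (Fin n) => (((A \ B).card.choose j : ℕ) : ℚ)))
        '' (Set.Iic i)) := by
  induction i with
  | zero =>
    have h0 : (fun B : Finset (Fin n) => ((A \ B).card : ℚ) ^ 0)
        = (fun B => (((A \ B).card.choose 0 : ℕ) : ℚ)) := by
      funext B; simp
    rw [h0]
    exact Submodule.subset_span ⟨0, Set.mem_Iic.2 (Nat.zero_le _), rfl⟩
  | succ i ih =>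
    have hstep : (fun B : Finset (Fin n) => ((A \ B).card : ℚ) ^ (i+1))
        = mulCard A (fun B => ((A \ B).card : ℚ) ^ i) := by
      funext B
      simp only [mulCard, LinearMap.coe_mk, AddHom.coe_mk]
      ring
    rw [hstep]
    have h1 := Submodule.apply_mem_span_image_of_mem_span (mulCard A) ih
    refine Submodule.span_le.2 ?_ h1
    rintro x ⟨y, ⟨j, hj, rfl⟩, rfl⟩
    have hx : mulCard A (fun B : Finset (Fin n) => (((A \ B).card.choose j : ℕ) : ℚ))
        = ((j:ℚ)+1) • (fun B : Finset (Fin n) => (((A \ B).card.choose (j+1) : ℕ) : ℚ))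
          + (j:ℚ) • (fun B : Finset (Fin n) => (((A \ B).card.choose j : ℕ) : ℚ)) := by
      funext B
      simp only [mulCard, LinearMap.coe_mk, AddHom.coe_mk, Pi.add_apply, Pi.smul_apply,
        smul_eq_mul]
      exact cast_choose_id _ j
    rw [hx]
    apply Submodule.add_mem
    · exact Submodule.smul_mem _ _ (Submodule.subset_span
        ⟨j+1, Set.mem_Iic.2 (by have hj' : j ≤ i := hj; omega), rfl⟩)
    · exact Submodule.smul_mem _ _ (Submodule.subset_span
        ⟨j, Set.mem_Iic.2 (by have hj' : j ≤ i := hj; omega), rfl⟩)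

lemma phi_mem_span (L : Finset ℕ) (m : ℕ → ℕ) (A : Finset (Fin n)) (D : ℕ)
    (hD : ∑ ℓ ∈ L, m ℓ = D) :
    (fun B : Finset (Fin n) =>
        ((∏ ℓ ∈ L, (((A \ B).card : ℤ) - (ℓ:ℤ)) ^ (m ℓ) : ℤ) : ℚ)) ∈
      Submodule.span ℚ (MS '' {S : Finset (Fin n) | S.card ≤ D}) := by
  classical
  set P : Polynomial ℚ := ∏ ℓ ∈ L, (Polynomial.X - Polynomial.C (ℓ:ℚ)) ^ (m ℓ) with hP
  have hPdeg : P.natDegree = D := by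
    rw [hP, Polynomial.natDegree_prod _ _ (fun ℓ _ => pow_ne_zero _ (Polynomial.X_sub_C_ne_zero _))]
    rw [← hD]
    apply Finset.sum_congr rfl
    intro ℓ _
    rw [Polynomial.natDegree_pow, Polynomial.natDegree_X_sub_C, Nat.mul_one]
  have hPeval : ∀ x : ℚ, P.eval x = ∏ ℓ ∈ L, (x - (ℓ:ℚ)) ^ (m ℓ) := by
    intro x
    rw [hP, Polynomial.eval_prod]
    apply Finset.prod_congr rfl
    intro ℓ _
    rw [Polynomial.eval_pow, Polynomial.eval_sub, Polynomial.eval_X, Polynomial.eval_C]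
  have hfun : (fun B : Finset (Fin n) =>
        ((∏ ℓ ∈ L, (((A \ B).card : ℤ) - (ℓ:ℤ)) ^ (m ℓ) : ℤ) : ℚ))
      = ∑ i ∈ Finset.range (D + 1),
          P.coeff i • (fun B : Finset (Fin n) => ((A \ B).card : ℚ) ^ i) := by
    funext B
    rw [Finset.sum_apply]
    have h1 : ((∏ ℓ ∈ L, (((A \ B).card : ℤ) - (ℓ:ℤ)) ^ (m ℓ) : ℤ) : ℚ)
        = ∏ ℓ ∈ L, (((A \ B).card : ℚ) - (ℓ:ℚ)) ^ (m ℓ) := by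
      push_cast
      rfl
    rw [h1, ← hPeval, Polynomial.eval_eq_sum_range, hPdeg]
    apply Finset.sum_congr rfl
    intro i _
    simp [smul_eq_mul]
  rw [hfun]
  apply Submodule.sum_mem
  intro i hi
  rw [Finset.mem_range] at hi
  apply Submodule.smul_mem
  have h2 := pow_mem_span A i
  refine Submodule.span_le.2 ?_ h2
  rintro x ⟨j, hj, rfl⟩
  have hj' : j ≤ i := hj
  have hmem : (fun B : Finset (Fin n) => (((A \ B).card.choose j : ℕ) : ℚ))
      ∈ Submodule.span ℚ (MS '' {S : Finset (Fin n) | S.card ≤ D}) := by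
    rw [choose_eq_sum A j]
    apply Submodule.sum_mem
    intro S hS
    rw [Finset.mem_powersetCard] at hS
    exact Submodule.subset_span ⟨S, by
      rw [Set.mem_setOf_eq, hS.2]
      omega, rfl⟩
  exact hmem


lemma indep_abstract (p : ℕ) (hp : p.Prime) (ι : Type) [Fintype ι] [DecidableEq ι]
    (f : ι → ι → ℤ) (a : ℕ)
    (hdiag : ∀ B, ¬ ((p:ℤ)^(a+1) ∣ f B B))
    (hoff : ∀ A B, A ≠ B → (p:ℤ)^(a+1) ∣ f A B)
    (g : ι → ℚ) (hrel : ∀ B, ∑ A : ι, g A * (f A B : ℚ) = 0) : ∀ A, g A = 0 := by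
  classical
  have hpZ : Prime (p : ℤ) := by
    rw [Int.prime_iff_natAbs_prime]
    simpa using hp
  set N : ℕ := ∏ A : ι, (g A).den with hN
  have hNpos : 0 < N := Finset.prod_pos (fun A _ => (g A).den_pos)
  have hint : ∀ A, ∃ z : ℤ, (z : ℚ) = g A * N := by
    intro A
    refine ⟨(g A).num * ((N / (g A).den : ℕ) : ℤ), ?_⟩
    have hdvd : (g A).den ∣ N := Finset.dvd_prod_of_mem _ (Finset.mem_univ A)
    have hden : ((g A).den : ℚ) ≠ 0 := Nat.cast_ne_zero.2 (g A).den_nz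
    have hcast : (((g A).num * ((N / (g A).den : ℕ) : ℤ) : ℤ) : ℚ)
        = ((g A).num : ℚ) * (((N / (g A).den : ℕ) : ℕ) : ℚ) := by
      simp only [Int.cast_mul, Int.cast_natCast]
    rw [hcast, Nat.cast_div hdvd hden]
    have h2 : (g A) * ((g A).den : ℚ) = ((g A).num : ℚ) := Rat.mul_den_eq_num _
    field_simp
    linear_combination (-1 : ℚ) * h2
  choose c hc using hint
  have hrelZ : ∀ B, ∑ A : ι, c A * f A B = 0 := by
    intro B
    have h1 : ((∑ A : ι, c A * f A B : ℤ) : ℚ) = 0 := by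
      push_cast
      have h2 : ∑ A : ι, (c A : ℚ) * (f A B : ℚ) = ∑ A : ι, (N : ℚ) * (g A * (f A B : ℚ)) := by
        apply Finset.sum_congr rfl
        intro A _
        rw [hc A]
        ring
      rw [h2, ← Finset.mul_sum, hrel B, mul_zero]
    exact_mod_cast h1
  have pdvd : ∀ j : ℕ, ∀ A, (p:ℤ)^j ∣ c A := by
    intro j
    induction j with
    | zero => intro A; simp
    | succ j ih =>
      intro B
      set c' : ι → ℤ := fun A => c A / (p:ℤ)^j with hc'def
      have hc' : ∀ A, c A = (p:ℤ)^j * c' A := by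
        intro A
        rw [hc'def]
        exact (Int.mul_ediv_cancel' (ih A)).symm
      have hrel' : ∑ A : ι, c' A * f A B = 0 := by
        have h1 : (p:ℤ)^j * ∑ A : ι, c' A * f A B = 0 := by
          rw [Finset.mul_sum]
          rw [← hrelZ B]
          apply Finset.sum_congr rfl
          intro A _
          rw [hc' A]
          ring
        rcases mul_eq_zero.1 h1 with h | h
        · exact absurd h (pow_ne_zero _ (by exact_mod_cast hp.ne_zero))
        · exact h
      have hsplit : c' B * f B B + ∑ A ∈ Finset.univ.erase B, c' A * f A B
          = ∑ A : ι, c' A * f A B :=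
        Finset.add_sum_erase _ (fun A => c' A * f A B) (Finset.mem_univ B)
      have hrest : (p:ℤ)^(a+1) ∣ ∑ A ∈ Finset.univ.erase B, c' A * f A B := by
        apply Finset.dvd_sum
        intro A hA
        exact Dvd.dvd.mul_left (hoff A B (Finset.ne_of_mem_erase hA)) _
      have hBB : (p:ℤ)^(a+1) ∣ c' B * f B B := by
        have heq : c' B * f B B
            = ∑ A : ι, c' A * f A B - ∑ A ∈ Finset.univ.erase B, c' A * f A B :=
          eq_sub_of_add_eq hsplit
        rw [heq, hrel']
        exact dvd_sub (dvd_zero _) hrest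
      have hpc : (p:ℤ) ∣ c' B := by
        by_contra hnd
        have hcop : IsCoprime ((p:ℤ)^(a+1)) (c' B) :=
          (IsCoprime.pow_left ((hpZ.coprime_iff_not_dvd).2 hnd))
        exact hdiag B (hcop.dvd_of_dvd_mul_left hBB)
      obtain ⟨w, hw⟩ := hpc
      refine ⟨w, ?_⟩
      rw [hc' B, hw]
      ring
  intro A
  have hcA : c A = 0 := by
    by_contra hne
    have h1 : (p:ℤ)^((c A).natAbs) ≤ |c A| :=
      Int.le_of_dvd (abs_pos.2 hne) ((dvd_abs _ _).2 (pdvd _ A))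
    have h2 : (c A).natAbs < p ^ (c A).natAbs := Nat.lt_pow_self hp.one_lt
    have h3 : |c A| = ((c A).natAbs : ℤ) := Int.abs_eq_natAbs _
    rw [h3] at h1
    have h4 : ((p:ℤ))^((c A).natAbs) = ((p ^ (c A).natAbs : ℕ) : ℤ) := by push_cast; ring
    rw [h4] at h1
    have h5 : (p : ℕ) ^ (c A).natAbs ≤ (c A).natAbs := by exact_mod_cast h1
    omega
  have := hc A
  rw [hcA] at this
  have hN0 : ((N : ℚ)) ≠ 0 := Nat.cast_ne_zero.2 (Nat.pos_iff_ne_zero.1 hNpos)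
  rcases mul_eq_zero.1 this.symm with h | h
  · exact h
  · exact absurd h hN0


end Stmt14

open Stmt14 in
theorem stmt_14 (n q s : ℕ) (hq : IsPrimePow q)
    (L : Finset ℕ) (hL : L ⊆ Finset.Icc 1 (q - 1)) (hLs : L.card = s)
    (F : Finset (Finset (Fin n)))
    (hF : ∀ A ∈ F, ∀ B ∈ F, A ≠ B → ∃ ℓ ∈ L, (A \ B).card ≡ ℓ [MOD q]) :
    F.card ≤ ∑ i ∈ Finset.range (2 ^ (s - 1) + 1), n.choose i := by
  classical
  obtain ⟨p, k, hpP, hk, hpk⟩ := hq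
  have hp : p.Prime := Nat.prime_iff.2 hpP
  have hq2 : 2 ≤ q := by
    rw [← hpk]
    calc 2 ≤ p := hp.two_le
      _ = p ^ 1 := (pow_one p).symm
      _ ≤ p ^ k := Nat.pow_le_pow_right (le_of_lt hp.one_lt) hk
  set e : ℕ → ℕ := fun ℓ => ℓ.factorization p with he_def
  have heq : ∀ ℓ, e ℓ = ℓ.factorization p := fun ℓ => rfl
  have hL1 : ∀ ℓ ∈ L, 1 ≤ ℓ := fun ℓ h => (Finset.mem_Icc.1 (hL h)).1
  have hLq : ∀ ℓ ∈ L, ℓ < q := fun ℓ h => by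
    have h2 := (Finset.mem_Icc.1 (hL h)).2
    omega
  have he : ∀ ℓ ∈ L, e ℓ < k := by
    intro ℓ hℓ
    by_contra hcon
    push_neg at hcon
    have h1 : p ^ k ∣ ℓ := dvd_trans (pow_dvd_pow p hcon) (Nat.ordProj_dvd ℓ p)
    have h2 : p ^ k ≤ ℓ := Nat.le_of_dvd (by have := hL1 ℓ hℓ; omega) h1
    have h3 := hLq ℓ hℓ
    omega
  set D := ∑ ℓ ∈ L, mu k e L (e ℓ) with hD
  set A0 := ∑ ℓ ∈ L, mu k e L (e ℓ) * e ℓ with hA0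
  set φ : Finset (Fin n) → Finset (Fin n) → ℚ := fun A B =>
    ((∏ ℓ ∈ L, (((A \ B).card : ℤ) - (ℓ:ℤ)) ^ (mu k e L (e ℓ)) : ℤ) : ℚ) with hφ
  -- linear independence of the φ_A, A ∈ F
  have hindep : LinearIndependent ℚ (fun A : {x // x ∈ F} => φ A.1) := by
    rw [Fintype.linearIndependent_iff]
    intro g hg
    have hdiag : ∀ B : {x // x ∈ F},
        ¬ ((p:ℤ)^(A0+1) ∣ ∏ ℓ ∈ L, (((B.1 \ B.1).card : ℤ) - (ℓ:ℤ)) ^ (mu k e L (e ℓ))) := by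
      intro B
      have h0 : (((B.1 \ B.1).card : ℕ) : ℤ) = 0 := by simp
      have hrw : (∏ ℓ ∈ L, (((B.1 \ B.1).card : ℤ) - (ℓ:ℤ)) ^ (mu k e L (e ℓ)))
          = ∏ ℓ ∈ L, ((0:ℤ) - (ℓ:ℤ)) ^ (mu k e L (e ℓ)) := by rw [h0]
      rw [hrw, hA0]
      exact key1 p k L hp e heq hL1
    have hoff : ∀ A B : {x // x ∈ F}, A ≠ B →
        (p:ℤ)^(A0+1) ∣ ∏ ℓ ∈ L, (((A.1 \ B.1).card : ℤ) - (ℓ:ℤ)) ^ (mu k e L (e ℓ)) := by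
      intro A B hne
      obtain ⟨ℓ₀, hℓ₀, hmod⟩ := hF A.1 A.2 B.1 B.2 (fun hAB => hne (Subtype.ext hAB))
      rw [← hpk] at hmod
      rw [hA0]
      exact key2 p k L hp e heq he _ ℓ₀ hℓ₀ hmod
    have hrel : ∀ B : {x // x ∈ F}, ∑ A : {x // x ∈ F},
        g A * ((∏ ℓ ∈ L, (((A.1 \ B.1).card : ℤ) - (ℓ:ℤ)) ^ (mu k e L (e ℓ)) : ℤ) : ℚ) = 0 := by
      intro B
      have h1 := congrFun hg B.1
      rw [Finset.sum_apply] at h1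
      simpa [hφ, smul_eq_mul] using h1
    exact indep_abstract p hp {x // x ∈ F}
      (fun A B => ∏ ℓ ∈ L, (((A.1 \ B.1).card : ℤ) - (ℓ:ℤ)) ^ (mu k e L (e ℓ))) A0
      hdiag hoff g hrel
  -- span membership
  have hspan : ∀ A : Finset (Fin n), φ A ∈
      Submodule.span ℚ (MS '' {S : Finset (Fin n) | S.card ≤ D}) := by
    intro A
    rw [hφ]
    exact phi_mem_span L (fun ℓ => mu k e L (e ℓ)) A D hD.symm
  set TS : Finset (Finset (Fin n)) := Finset.univ.filter (fun S => S.card ≤ D) with hTS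
  set GS : Finset (Finset (Fin n) → ℚ) := TS.image MS with hGS
  have hsetimg : MS '' {S : Finset (Fin n) | S.card ≤ D} = ↑GS := by
    rw [hGS, Finset.coe_image]
    ext S
    simp [hTS]
  set W := Submodule.span ℚ (↑GS : Set (Finset (Fin n) → ℚ)) with hWdef
  have hWmem : ∀ A, φ A ∈ W := by
    intro A
    rw [hWdef, ← hsetimg]
    exact hspan A
  haveI hFD : Module.Finite ℚ W := by
    rw [hWdef]
    exact Module.Finite.span_of_finite ℚ (GS.finite_toSet)
  set ψ : {x // x ∈ F} → W := fun A => ⟨φ A.1, hWmem A.1⟩ with hψ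
  have hψli : LinearIndependent ℚ ψ := by
    apply LinearIndependent.of_comp W.subtype
    exact hindep
  have hcard1 : Fintype.card {x // x ∈ F} ≤ Module.finrank ℚ W :=
    hψli.fintype_card_le_finrank
  have hfin : Module.finrank ℚ W ≤ GS.card := finrank_span_finset_le_card GS
  have hc0 : F.card = Fintype.card {x // x ∈ F} := (Fintype.card_coe F).symm
  have hc2 : GS.card ≤ TS.card := Finset.card_image_le
  have hc3 : TS.card ≤ ∑ i ∈ Finset.range (D+1), n.choose i := by
    have hsub : TS ⊆ (Finset.range (D+1)).biUnion
        (fun i => Finset.univ.powersetCard i) := by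
      intro S hS
      rw [hTS, Finset.mem_filter] at hS
      rw [Finset.mem_biUnion]
      exact ⟨S.card, Finset.mem_range.2 (by omega),
        Finset.mem_powersetCard.2 ⟨Finset.subset_univ S, rfl⟩⟩
    calc TS.card
        ≤ ((Finset.range (D+1)).biUnion (fun i => Finset.univ.powersetCard i)).card :=
          Finset.card_le_card hsub
      _ ≤ ∑ i ∈ Finset.range (D+1), (Finset.univ.powersetCard i).card :=
          Finset.card_biUnion_le
      _ = ∑ i ∈ Finset.range (D+1), n.choose i := by
          apply Finset.sum_congr rfl
          intro i _
          rw [Finset.card_powersetCard, Finset.card_univ, Fintype.card_fin]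
  have hDle : D ≤ 2^(s-1) := by rw [hD]; exact sum_mu_le k e L he s hLs
  have hc4 : ∑ i ∈ Finset.range (D+1), n.choose i
      ≤ ∑ i ∈ Finset.range (2^(s-1)+1), n.choose i := by
    apply Finset.sum_le_sum_of_subset
    apply Finset.range_subset_range.2
    omega
  omega
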